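/- Let n₁, n₂ ≥ 1. There is a constant C, depending only on n₁ and n₂, such that for all half-open cubes I¹ ⊂ ℝ^{n₁} and I² ⊂ ℝ^{n₂}, all signatures η¹ ∈ {0,1}^{n₁}, η² ∈ {0,1}^{n₂}, and all v = (v₁,v₂) ∈ ℝ^{n₁}×ℝ^{n₂}: ‖τ_v(h_{I¹}^{η¹} ⊗ h_{I²}^{η²}) − h_{I¹}^{η¹} ⊗ h_{I²}^{η²}‖_{L²(ℝ^{n₁+n₂})} ≤ C ( |v₁|^{1/2} ℓ(I¹)^{−1/2} + |v₂|^{1/2} ℓ(I²)^{−1/2} ), where |v_i| is the ℓ^∞ norm of v_i. -/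

import Mathlib

open MeasureTheory Set
open scoped ENNReal NNReal

noncomputable section

abbrev Rn (n : ℕ) := Fin n → ℝ
abbrev Rnn (n₁ n₂ : ℕ) := Rn n₁ × Rn n₂

/-- A (half-open, axis-parallel) cube in `ℝⁿ`, given by its lower-left corner and its
(positive) sidelength. -/
structure Cube (n : ℕ) where
  corner : Fin n → ℝ
  len : ℝ
  len_pos : 0 < len

/-- The one-dimensional Haar functions on `[a, a + l)`:
`h⁰ = l^{-1/2} 1_{[a, a+l)}` and `h¹ = l^{-1/2}(1_{[a, a+l/2)} - 1_{[a+l/2, a+l)})`. -/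
def haar1 (a l : ℝ) (e : Bool) (t : ℝ) : ℝ :=
  if e then
    (Real.sqrt l)⁻¹ *
      ((if a ≤ t ∧ t < a + l / 2 then (1 : ℝ) else 0) -
        (if a + l / 2 ≤ t ∧ t < a + l then (1 : ℝ) else 0))
  else (Real.sqrt l)⁻¹ * (if a ≤ t ∧ t < a + l then (1 : ℝ) else 0)

/-- The Haar function `h_I^η = h_{I₁}^{η₁} ⊗ ⋯ ⊗ h_{I_n}^{η_n}` of a cube `I ⊂ ℝⁿ` and a
signature `η ∈ {0,1}^n`. -/
def haarCube {n : ℕ} (I : Cube n) (η : Fin n → Bool) (x : Rn n) : ℝ :=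
  ∏ i, haar1 (I.corner i) I.len (η i) (x i)

/-! ### Auxiliary lemmas -/

section Aux

lemma measurable_haar1 (a l : ℝ) (e : Bool) : Measurable (haar1 a l e) := by
  have hind : ∀ c d : ℝ, Measurable (fun t : ℝ => if c ≤ t ∧ t < d then (1 : ℝ) else 0) := by
    intro c d
    exact Measurable.ite (measurableSet_Ico (a := c) (b := d)) measurable_const measurable_const
  unfold haar1
  cases e
  · simp only [Bool.false_eq_true, ↓reduceIte]; exact measurable_const.mul (hind a (a + l))
  · simp only [↓reduceIte]; exact measurable_const.mul ((hind a (a + l / 2)).sub (hind (a + l / 2) (a + l)))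

lemma norm_haar1_le (a l : ℝ) (e : Bool) (t : ℝ) : ‖haar1 a l e t‖ ≤ (Real.sqrt l)⁻¹ := by
  have h0 : (0 : ℝ) ≤ (Real.sqrt l)⁻¹ := inv_nonneg.2 (Real.sqrt_nonneg l)
  unfold haar1
  cases e <;> simp only [Bool.false_eq_true, if_false, if_true] <;>
    rw [Real.norm_eq_abs, abs_mul, abs_of_nonneg h0] <;>
    split_ifs <;> simp [h0]

lemma haar1_eq_zero (a l : ℝ) (hl : 0 < l) (e : Bool) (t : ℝ) (ht : t ∉ Ico a (a + l)) :
    haar1 a l e t = 0 := by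
  simp only [mem_Ico, not_and_or, not_le, not_lt] at ht
  unfold haar1
  have h1 : ¬(a ≤ t ∧ t < a + l / 2) := by rintro ⟨u1, u2⟩; rcases ht with h | h <;> linarith
  have h2 : ¬(a + l / 2 ≤ t ∧ t < a + l) := by rintro ⟨u1, u2⟩; rcases ht with h | h <;> linarith
  have h3 : ¬(a ≤ t ∧ t < a + l) := by rintro ⟨u1, u2⟩; rcases ht with h | h <;> linarith
  cases e <;> simp [h1, h2, h3]

lemma eLpNorm_haar1_le_one (a l : ℝ) (hl : 0 < l) (e : Bool) :
    eLpNorm (haar1 a l e) 2 volume ≤ 1 := by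
  have h0 : (0 : ℝ) ≤ (Real.sqrt l)⁻¹ := inv_nonneg.2 (Real.sqrt_nonneg l)
  have hmono : ∀ t, ‖haar1 a l e t‖ ≤
      ‖(Ico a (a + l)).indicator (fun _ => (Real.sqrt l)⁻¹) t‖ := by
    intro t
    by_cases ht : t ∈ Ico a (a + l)
    · rw [Set.indicator_of_mem ht]
      refine (norm_haar1_le a l e t).trans ?_
      rw [Real.norm_eq_abs, abs_of_nonneg h0]
    · rw [haar1_eq_zero a l hl e t ht, Set.indicator_of_notMem ht]
  refine (eLpNorm_mono hmono).trans ?_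
  rw [eLpNorm_indicator_const measurableSet_Ico (by norm_num) (by simp)]
  have hv : volume (Ico a (a + l)) = ENNReal.ofReal l := by
    rw [Real.volume_Ico]; ring_nf
  rw [hv]
  have ht2 : (1 : ℝ) / (2 : ℝ≥0∞).toReal = (1 : ℝ) / 2 := by simp
  rw [ht2]
  have h1 : (ENNReal.ofReal l) ^ ((1 : ℝ) / 2) = ENNReal.ofReal (Real.sqrt l) := by
    rw [ENNReal.ofReal_rpow_of_nonneg hl.le (by norm_num), ← Real.sqrt_eq_rpow]
  have h2 : ((‖(Real.sqrt l)⁻¹‖ₑ : ℝ≥0∞)) = ENNReal.ofReal ((Real.sqrt l)⁻¹) := by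
    rw [← Real.enorm_eq_ofReal h0]
  rw [h1, h2, ← ENNReal.ofReal_mul h0, inv_mul_cancel₀ (Real.sqrt_ne_zero'.2 hl)]
  simp

lemma shift_iff (p s t : ℝ) (hp : t ∉ uIcc p (p + s)) :
    ((p ≤ t - s ↔ p ≤ t) ∧ (t - s < p ↔ t < p)) := by
  simp only [Set.mem_uIcc, not_or, not_and, not_le] at hp
  obtain ⟨h1, h2⟩ := hp
  have key : p ≤ t - s ↔ p ≤ t := by
    constructor
    · intro h
      exact le_of_lt (h2 (by linarith))
    · intro h
      have := h1 h
      linarith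
  refine ⟨key, ?_⟩
  rw [← not_le, ← not_le, key]

lemma haar1_shift_eq (a l s : ℝ) (e : Bool) (t : ℝ)
    (ht : t ∉ uIcc a (a + s) ∪ uIcc (a + l / 2) (a + l / 2 + s) ∪ uIcc (a + l) (a + l + s)) :
    haar1 a l e (t - s) = haar1 a l e t := by
  simp only [Set.mem_union, not_or] at ht
  obtain ⟨⟨ht1, ht2⟩, ht3⟩ := ht
  obtain ⟨i1, _⟩ := shift_iff a s t ht1
  obtain ⟨i3, i4⟩ := shift_iff (a + l / 2) s t ht2
  obtain ⟨_, i6⟩ := shift_iff (a + l) s t ht3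
  unfold haar1
  cases e <;> simp only [i1, i3, i4, i6]

lemma eLpNorm_haar1_shift (a l s : ℝ) (hl : 0 < l) (e : Bool) :
    eLpNorm (fun t => haar1 a l e (t - s) - haar1 a l e t) 2 volume ≤
      ENNReal.ofReal (4 * (|s| ^ ((1 : ℝ) / 2) * l ^ (-(1 : ℝ) / 2))) := by
  have h0 : (0 : ℝ) ≤ (Real.sqrt l)⁻¹ := inv_nonneg.2 (Real.sqrt_nonneg l)
  set S : Set ℝ :=
    uIcc a (a + s) ∪ uIcc (a + l / 2) (a + l / 2 + s) ∪ uIcc (a + l) (a + l + s) with hS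
  have hc0 : (0 : ℝ) ≤ 2 * (Real.sqrt l)⁻¹ := by positivity
  have hmono : ∀ t, ‖haar1 a l e (t - s) - haar1 a l e t‖ ≤
      ‖S.indicator (fun _ => 2 * (Real.sqrt l)⁻¹) t‖ := by
    intro t
    by_cases ht : t ∈ S
    · rw [Set.indicator_of_mem ht]
      have hnn : ‖(2 * (Real.sqrt l)⁻¹ : ℝ)‖ = 2 * (Real.sqrt l)⁻¹ := by
        rw [Real.norm_eq_abs, abs_of_nonneg hc0]
      rw [hnn]
      calc ‖haar1 a l e (t - s) - haar1 a l e t‖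
          ≤ ‖haar1 a l e (t - s)‖ + ‖haar1 a l e t‖ := norm_sub_le _ _
        _ ≤ (Real.sqrt l)⁻¹ + (Real.sqrt l)⁻¹ :=
            add_le_add (norm_haar1_le a l e (t - s)) (norm_haar1_le a l e t)
        _ = 2 * (Real.sqrt l)⁻¹ := by ring
    · rw [haar1_shift_eq a l s e t ht, sub_self, Set.indicator_of_notMem ht]
  refine (eLpNorm_mono hmono).trans ?_
  have hSm : MeasurableSet S :=
    ((measurableSet_uIcc.union measurableSet_uIcc).union measurableSet_uIcc)
  rw [eLpNorm_indicator_const hSm (by norm_num) (by simp)]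
  have hvol : volume S ≤ ENNReal.ofReal (3 * |s|) := by
    have e1 : volume (uIcc a (a + s)) = ENNReal.ofReal |s| := by
      rw [Real.volume_interval, add_sub_cancel_left]
    have e2 : volume (uIcc (a + l / 2) (a + l / 2 + s)) = ENNReal.ofReal |s| := by
      rw [Real.volume_interval, add_sub_cancel_left]
    have e3 : volume (uIcc (a + l) (a + l + s)) = ENNReal.ofReal |s| := by
      rw [Real.volume_interval, add_sub_cancel_left]
    calc volume S ≤ volume (uIcc a (a + s) ∪ uIcc (a + l / 2) (a + l / 2 + s)) +
          volume (uIcc (a + l) (a + l + s)) := measure_union_le _ _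
      _ ≤ volume (uIcc a (a + s)) + volume (uIcc (a + l / 2) (a + l / 2 + s)) +
          volume (uIcc (a + l) (a + l + s)) := by
            exact add_le_add_left (measure_union_le _ _) _
      _ = ENNReal.ofReal |s| + ENNReal.ofReal |s| + ENNReal.ofReal |s| := by rw [e1, e2, e3]
      _ = ENNReal.ofReal (3 * |s|) := by
          rw [← ENNReal.ofReal_add (abs_nonneg s) (abs_nonneg s),
            ← ENNReal.ofReal_add (by positivity) (abs_nonneg s)]
          congr 1
          ring
  have ht2 : (1 : ℝ) / (2 : ℝ≥0∞).toReal = (1 : ℝ) / 2 := by simp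
  rw [ht2]
  have hnorm : ((‖2 * (Real.sqrt l)⁻¹‖ₑ : ℝ≥0∞)) = ENNReal.ofReal (2 * (Real.sqrt l)⁻¹) := by
    rw [← Real.enorm_eq_ofReal hc0]
  calc (‖2 * (Real.sqrt l)⁻¹‖ₑ : ℝ≥0∞) * volume S ^ ((1 : ℝ) / 2)
      ≤ (‖2 * (Real.sqrt l)⁻¹‖ₑ : ℝ≥0∞) * (ENNReal.ofReal (3 * |s|)) ^ ((1 : ℝ) / 2) := by
        gcongr
    _ = ENNReal.ofReal (2 * (Real.sqrt l)⁻¹ * (3 * |s|) ^ ((1 : ℝ) / 2)) := by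
        rw [hnorm, ENNReal.ofReal_rpow_of_nonneg (by positivity) (by norm_num),
          ← ENNReal.ofReal_mul hc0]
    _ ≤ ENNReal.ofReal (4 * (|s| ^ ((1 : ℝ) / 2) * l ^ (-(1 : ℝ) / 2))) := by
        apply ENNReal.ofReal_le_ofReal
        have hl2 : l ^ (-(1 : ℝ) / 2) = (Real.sqrt l)⁻¹ := by
          rw [show (-(1 : ℝ) / 2) = -((1 : ℝ) / 2) by ring, Real.rpow_neg hl.le,
            ← Real.sqrt_eq_rpow]
        rw [hl2]
        have hsplit : (3 * |s|) ^ ((1 : ℝ) / 2) =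
            (3 : ℝ) ^ ((1 : ℝ) / 2) * |s| ^ ((1 : ℝ) / 2) := by
          rw [Real.mul_rpow (by norm_num) (abs_nonneg s)]
        have h3le : (3 : ℝ) ^ ((1 : ℝ) / 2) ≤ 2 := by
          rw [← Real.sqrt_eq_rpow]
          have : Real.sqrt 3 ≤ Real.sqrt 4 := Real.sqrt_le_sqrt (by norm_num)
          have h4 : Real.sqrt 4 = 2 := by
            rw [show (4 : ℝ) = 2 ^ 2 by norm_num, Real.sqrt_sq (by norm_num : (0:ℝ) ≤ 2)]
          linarith
        have hs0 : (0 : ℝ) ≤ |s| ^ ((1 : ℝ) / 2) := Real.rpow_nonneg (abs_nonneg s) _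
        calc 2 * (Real.sqrt l)⁻¹ * (3 * |s|) ^ ((1 : ℝ) / 2)
            = (2 * (3 : ℝ) ^ ((1 : ℝ) / 2)) * (|s| ^ ((1 : ℝ) / 2) * (Real.sqrt l)⁻¹) := by
              rw [hsplit]; ring
          _ ≤ 4 * (|s| ^ ((1 : ℝ) / 2) * (Real.sqrt l)⁻¹) := by
              apply mul_le_mul_of_nonneg_right (by linarith) (by positivity)

lemma rpow_two' (x : ℝ≥0∞) : x ^ (2 : ℝ) = x * x := by
  rw [show (2 : ℝ) = ((2 : ℕ) : ℝ) by norm_num, ENNReal.rpow_natCast, sq]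

lemma prod_rpow_nonneg {ι : Type*} (s : Finset ι) (f : ι → ℝ≥0∞) {r : ℝ} (hr : 0 ≤ r) :
    (∏ i ∈ s, f i) ^ r = ∏ i ∈ s, f i ^ r := by
  induction s using Finset.cons_induction with
  | empty => simp [ENNReal.one_rpow]
  | cons a s ha ih =>
      rw [Finset.prod_cons, Finset.prod_cons, ENNReal.mul_rpow_of_nonneg _ _ hr, ih]

lemma lintegral_pi_prod : ∀ {n : ℕ} (f : Fin n → ℝ → ℝ≥0∞), (∀ i, Measurable (f i)) →
    ∫⁻ x : Rn n, ∏ i, f i (x i) ∂volume = ∏ i, ∫⁻ t, f i t := by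
  intro n
  induction n with
  | zero =>
      intro f hf
      simp only [Finset.univ_eq_empty, Finset.prod_empty]
      rw [lintegral_const, one_mul, volume_pi, Measure.pi_empty_univ]
  | succ n ih =>
      intro f hf
      have A := (measurePreserving_piFinSuccAbove
        (fun _ : Fin (n + 1) => (volume : Measure ℝ)) 0).symm
      rw [volume_pi, ← A.lintegral_comp_emb (MeasurableEquiv.measurableEmbedding _)]
      simp only [Function.comp_def, MeasurableEquiv.piFinSuccAbove_symm_apply, Fin.insertNthEquiv,
        Equiv.coe_fn_mk, Fin.insertNth_zero, Fin.prod_univ_succ, Fin.zero_succAbove, cast_eq, Fin.cons_zero,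
        Fin.cons_succ]
      have hg : Measurable (fun y : Rn n => ∏ i : Fin n, f i.succ (y i)) :=
        Finset.measurable_prod Finset.univ (fun i _ => (hf i.succ).comp (measurable_pi_apply i))
      have hpi : (Measure.pi fun _ : Fin n => (volume : Measure ℝ)) = volume := (volume_pi).symm
      rw [hpi]
      calc (∫⁻ a : ℝ × Rn n, f 0 a.1 * ∏ x : Fin n, f x.succ (a.2 x)
              ∂(volume : Measure ℝ).prod (volume : Measure (Rn n)))
          = (∫⁻ t, f 0 t) * ∫⁻ y : Rn n, ∏ i : Fin n, f i.succ (y i) :=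
            lintegral_prod_mul (hf 0).aemeasurable hg.aemeasurable
        _ = (∫⁻ t, f 0 t) * ∏ i : Fin n, ∫⁻ t, f i.succ t := by
            rw [ih (fun i => f i.succ) (fun i => hf i.succ)]

lemma eLpNorm_pi_prod {n : ℕ} (F : Fin n → ℝ → ℝ) (hF : ∀ i, Measurable (F i)) :
    eLpNorm (fun x : Rn n => ∏ i, F i (x i)) 2 volume = ∏ i, eLpNorm (F i) 2 volume := by
  have hp0 : (2 : ℝ≥0∞) ≠ 0 := by norm_num
  have hpt : (2 : ℝ≥0∞) ≠ ∞ := by simp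
  have ht2 : ((2 : ℝ≥0∞)).toReal = (2 : ℝ) := by simp
  rw [eLpNorm_eq_lintegral_rpow_enorm_toReal hp0 hpt]
  simp_rw [ht2, enorm_eq_nnnorm]
  have e1 : ∀ x : Rn n, ((‖∏ i, F i (x i)‖₊ : ℝ≥0∞)) ^ (2 : ℝ)
      = ∏ i, ((‖F i (x i)‖₊ : ℝ≥0∞) * (‖F i (x i)‖₊ : ℝ≥0∞)) := by
    intro x
    rw [nnnorm_prod, ENNReal.coe_finset_prod,
      prod_rpow_nonneg _ _ (by norm_num : (0 : ℝ) ≤ 2)]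
    exact Finset.prod_congr rfl fun i _ => rpow_two' _
  simp_rw [e1]
  rw [lintegral_pi_prod (fun i t => (‖F i t‖₊ : ℝ≥0∞) * ‖F i t‖₊) (fun i =>
    ((hF i).nnnorm.coe_nnreal_ennreal).mul ((hF i).nnnorm.coe_nnreal_ennreal))]
  rw [prod_rpow_nonneg _ _ (by norm_num : (0 : ℝ) ≤ 1 / 2)]
  refine Finset.prod_congr rfl fun i _ => ?_
  rw [eLpNorm_eq_lintegral_rpow_enorm_toReal hp0 hpt]
  simp_rw [ht2, enorm_eq_nnnorm]
  congr 1
  exact lintegral_congr fun t => (rpow_two' _).symm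

lemma measurable_haarCube {n : ℕ} (I : Cube n) (η : Fin n → Bool) :
    Measurable (haarCube I η) :=
  Finset.measurable_prod Finset.univ fun i _ =>
    (measurable_haar1 _ _ _).comp (measurable_pi_apply i)

lemma eLpNorm_haarCube_le_one {n : ℕ} (I : Cube n) (η : Fin n → Bool) :
    eLpNorm (haarCube I η) 2 volume ≤ 1 := by
  have : haarCube I η = fun x : Rn n => ∏ i, haar1 (I.corner i) I.len (η i) (x i) := rfl
  rw [this, eLpNorm_pi_prod _ (fun i => measurable_haar1 _ _ _)]
  exact Finset.prod_le_one (fun i _ => zero_le)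
    (fun i _ => eLpNorm_haar1_le_one _ _ I.len_pos _)

lemma eLpNorm_haarCube_sub {n : ℕ} (I : Cube n) (η : Fin n → Bool) (w : Rn n) :
    eLpNorm (fun x : Rn n => haarCube I η (x - w) - haarCube I η x) 2 volume ≤
      (n : ℝ≥0∞) * ENNReal.ofReal (4 * (‖w‖ ^ ((1 : ℝ) / 2) * I.len ^ (-(1 : ℝ) / 2))) := by
  classical
  set F : Fin n → ℝ → ℝ := fun i => haar1 (I.corner i) I.len (η i) with hF
  set W : ℕ → Rn n := fun k i => if (i : ℕ) < k then w i else 0 with hWdef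
  have hW0 : W 0 = 0 := by funext i; simp [W]
  have hWn : W n = w := by funext i; simp [W, i.isLt]
  have hpt : (fun x : Rn n => haarCube I η (x - w) - haarCube I η x)
      = ∑ k ∈ Finset.range n,
          fun x : Rn n => haarCube I η (x - W (k + 1)) - haarCube I η (x - W k) := by
    funext x
    rw [Finset.sum_apply]
    rw [Finset.sum_range_sub (f := fun k => haarCube I η (x - W k))]
    rw [hWn, hW0, sub_zero]
  rw [hpt]
  have hmeas : ∀ k : ℕ, AEStronglyMeasurable
      (fun x : Rn n => haarCube I η (x - W (k + 1)) - haarCube I η (x - W k)) volume := by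
    intro k
    exact (((measurable_haarCube I η).comp (measurable_id.sub measurable_const)).sub
      ((measurable_haarCube I η).comp (measurable_id.sub measurable_const))).aestronglyMeasurable
  refine (eLpNorm_sum_le (fun k _ => hmeas k) one_le_two).trans ?_
  set B := ENNReal.ofReal (4 * (‖w‖ ^ ((1 : ℝ) / 2) * I.len ^ (-(1 : ℝ) / 2))) with hB
  have hterm : ∀ k ∈ Finset.range n,
      eLpNorm (fun x : Rn n => haarCube I η (x - W (k + 1)) - haarCube I η (x - W k)) 2 volume
        ≤ B := by
    intro k hk
    rw [Finset.mem_range] at hk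
    set κ : Fin n := ⟨k, hk⟩ with hκ
    set d : Rn n := W (k + 1) - W k with hd
    have hdi : ∀ i : Fin n, i ≠ κ → d i = 0 := by
      intro i hi
      have hik : (i : ℕ) ≠ k := fun h => hi (Fin.ext h)
      simp only [hd, Pi.sub_apply, hWdef]
      rcases lt_or_ge (i : ℕ) k with h | h
      · rw [if_pos (h.trans (Nat.lt_succ_self k)), if_pos h, sub_self]
      · rw [if_neg (by omega), if_neg (by omega), sub_self]
    have hdκ : d κ = w κ := by
      simp only [hd, Pi.sub_apply, hWdef, hκ]
      rw [if_pos (Nat.lt_succ_self k), if_neg (lt_irrefl k), sub_zero]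
    have hcomp : (fun x : Rn n => haarCube I η (x - W (k + 1)) - haarCube I η (x - W k))
        = (fun y : Rn n => haarCube I η (y - d) - haarCube I η y) ∘ (fun x => x - W k) := by
      funext x
      simp only [Function.comp_apply]
      have : x - W k - d = x - W (k + 1) := by rw [hd]; abel
      rw [this]
    have hgm : Measurable (fun y : Rn n => haarCube I η (y - d) - haarCube I η y) :=
      ((measurable_haarCube I η).comp (measurable_id.sub measurable_const)).sub
        (measurable_haarCube I η)
    rw [hcomp, eLpNorm_comp_measurePreserving hgm.aestronglyMeasurable
      (measurePreserving_sub_right volume (W k))]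
    set G : Fin n → ℝ → ℝ := fun i =>
      if i = κ then (fun t => F κ (t - w κ) - F κ t) else F i with hG
    have hGmeas : ∀ i, Measurable (G i) := by
      intro i
      by_cases h : i = κ <;> simp only [hG, h, if_true, if_false]
      · exact ((measurable_haar1 _ _ _).comp (measurable_id.sub measurable_const)).sub
          (measurable_haar1 _ _ _)
      · exact measurable_haar1 _ _ _
    have hGfact : (fun y : Rn n => haarCube I η (y - d) - haarCube I η y)
        = fun y : Rn n => ∏ i, G i (y i) := by
      funext y
      have h1 : haarCube I η (y - d)
          = F κ (y κ - w κ) * ∏ i ∈ Finset.univ.erase κ, F i (y i) := by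
        show (∏ i, F i ((y - d) i)) = _
        rw [← Finset.mul_prod_erase Finset.univ _ (Finset.mem_univ κ)]
        congr 1
        · rw [Pi.sub_apply, hdκ]
        · exact Finset.prod_congr rfl fun i hi => by
            rw [Pi.sub_apply, hdi i (Finset.ne_of_mem_erase hi), sub_zero]
      have h2 : haarCube I η y = F κ (y κ) * ∏ i ∈ Finset.univ.erase κ, F i (y i) := by
        show (∏ i, F i (y i)) = _
        rw [← Finset.mul_prod_erase Finset.univ _ (Finset.mem_univ κ)]
      have h3 : (∏ i, G i (y i))
          = (F κ (y κ - w κ) - F κ (y κ)) * ∏ i ∈ Finset.univ.erase κ, F i (y i) := by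
        rw [← Finset.mul_prod_erase Finset.univ _ (Finset.mem_univ κ)]
        congr 1
        · simp only [hG, if_pos rfl]
        · exact Finset.prod_congr rfl fun i hi => by
            simp only [hG, if_neg (Finset.ne_of_mem_erase hi)]
      rw [h1, h2, h3]; ring
    rw [hGfact, eLpNorm_pi_prod G hGmeas,
      ← Finset.mul_prod_erase Finset.univ _ (Finset.mem_univ κ)]
    have hGκ : eLpNorm (G κ) 2 volume ≤ B := by
      simp only [hG, if_pos rfl]
      refine (eLpNorm_haar1_shift (I.corner κ) I.len (w κ) I.len_pos (η κ)).trans ?_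
      rw [hB]
      apply ENNReal.ofReal_le_ofReal
      have hwk : |w κ| ≤ ‖w‖ := by
        have := norm_le_pi_norm w κ
        rwa [Real.norm_eq_abs] at this
      have h1 : |w κ| ^ ((1 : ℝ) / 2) ≤ ‖w‖ ^ ((1 : ℝ) / 2) :=
        Real.rpow_le_rpow (abs_nonneg _) hwk (by norm_num)
      have h2 : (0 : ℝ) ≤ I.len ^ (-(1 : ℝ) / 2) := Real.rpow_nonneg I.len_pos.le _
      nlinarith [Real.rpow_nonneg (abs_nonneg (w κ)) ((1 : ℝ) / 2)]
    have hrest : (∏ i ∈ Finset.univ.erase κ, eLpNorm (G i) 2 volume) ≤ 1 := by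
      refine Finset.prod_le_one (fun i _ => zero_le) (fun i hi => ?_)
      simp only [hG, if_neg (Finset.ne_of_mem_erase hi)]
      exact eLpNorm_haar1_le_one _ _ I.len_pos _
    calc eLpNorm (G κ) 2 volume * ∏ i ∈ Finset.univ.erase κ, eLpNorm (G i) 2 volume
        ≤ B * 1 := mul_le_mul' hGκ hrest
      _ = B := mul_one B
  calc (∑ k ∈ Finset.range n, eLpNorm
        (fun x : Rn n => haarCube I η (x - W (k + 1)) - haarCube I η (x - W k)) 2 volume)
      ≤ ∑ _k ∈ Finset.range n, B := Finset.sum_le_sum hterm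
    _ = (n : ℝ≥0∞) * B := by rw [Finset.sum_const, Finset.card_range, nsmul_eq_mul]

lemma eLpNorm_prod_mul {n₁ n₂ : ℕ} (A : Rn n₁ → ℝ) (Bf : Rn n₂ → ℝ)
    (hA : Measurable A) (hB : Measurable Bf) :
    eLpNorm (fun x : Rnn n₁ n₂ => A x.1 * Bf x.2) 2 volume
      = eLpNorm A 2 volume * eLpNorm Bf 2 volume := by
  have hp0 : (2 : ℝ≥0∞) ≠ 0 := by norm_num
  have hpt : (2 : ℝ≥0∞) ≠ ∞ := by simp
  have ht2 : ((2 : ℝ≥0∞)).toReal = (2 : ℝ) := by simp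
  rw [eLpNorm_eq_lintegral_rpow_enorm_toReal hp0 hpt, eLpNorm_eq_lintegral_rpow_enorm_toReal hp0 hpt,
    eLpNorm_eq_lintegral_rpow_enorm_toReal hp0 hpt]
  simp_rw [ht2, enorm_eq_nnnorm, rpow_two']
  have e1 : ∀ x : Rnn n₁ n₂,
      ((‖A x.1 * Bf x.2‖₊ : ℝ≥0∞)) * ((‖A x.1 * Bf x.2‖₊ : ℝ≥0∞))
        = ((‖A x.1‖₊ : ℝ≥0∞) * (‖A x.1‖₊ : ℝ≥0∞)) * ((‖Bf x.2‖₊ : ℝ≥0∞) * (‖Bf x.2‖₊ : ℝ≥0∞)) := by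
    intro x
    rw [nnnorm_mul, ENNReal.coe_mul]
    ring
  simp_rw [e1]
  rw [show (volume : Measure (Rnn n₁ n₂)) = (volume : Measure (Rn n₁)).prod volume from
    MeasureTheory.Measure.volume_eq_prod _ _]
  rw [lintegral_prod_mul (f := fun x => (‖A x‖₊ : ℝ≥0∞) * ‖A x‖₊)
    (g := fun y => (‖Bf y‖₊ : ℝ≥0∞) * ‖Bf y‖₊)
    ((hA.nnnorm.coe_nnreal_ennreal).mul (hA.nnnorm.coe_nnreal_ennreal)).aemeasurable
    ((hB.nnnorm.coe_nnreal_ennreal).mul (hB.nnnorm.coe_nnreal_ennreal)).aemeasurable]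
  rw [ENNReal.mul_rpow_of_nonneg _ _ (by positivity : (0 : ℝ) ≤ 1 / 2)]

end Aux

/-- the `L²` modulus of continuity of tensor Haar functions:
`‖τ_v (h_{I¹}^{η¹} ⊗ h_{I²}^{η²}) - h_{I¹}^{η¹} ⊗ h_{I²}^{η²}‖_{L²}
  ≤ C (|v₁|^{1/2} ℓ(I¹)^{-1/2} + |v₂|^{1/2} ℓ(I²)^{-1/2})`. -/
theorem haar_translation_L2
    (n₁ n₂ : ℕ) (hn₁ : 1 ≤ n₁) (hn₂ : 1 ≤ n₂) :
    ∃ C : ℝ, 0 < C ∧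
      ∀ (I₁ : Cube n₁) (I₂ : Cube n₂) (η₁ : Fin n₁ → Bool) (η₂ : Fin n₂ → Bool)
        (v : Rnn n₁ n₂),
        eLpNorm
          (fun x : Rnn n₁ n₂ =>
            haarCube I₁ η₁ (x.1 - v.1) * haarCube I₂ η₂ (x.2 - v.2) -
              haarCube I₁ η₁ x.1 * haarCube I₂ η₂ x.2) 2 volume ≤
        ENNReal.ofReal
          (C * (‖v.1‖ ^ ((1 : ℝ) / 2) * I₁.len ^ (-(1 : ℝ) / 2) +
            ‖v.2‖ ^ ((1 : ℝ) / 2) * I₂.len ^ (-(1 : ℝ) / 2))) := by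
  refine ⟨4 * (n₁ + n₂), by positivity, ?_⟩
  intro I₁ I₂ η₁ η₂ v
  set a₁ : ℝ := ‖v.1‖ ^ ((1 : ℝ) / 2) * I₁.len ^ (-(1 : ℝ) / 2) with ha₁
  set a₂ : ℝ := ‖v.2‖ ^ ((1 : ℝ) / 2) * I₂.len ^ (-(1 : ℝ) / 2) with ha₂
  have ha₁0 : 0 ≤ a₁ :=
    mul_nonneg (Real.rpow_nonneg (norm_nonneg _) _) (Real.rpow_nonneg I₁.len_pos.le _)
  have ha₂0 : 0 ≤ a₂ :=
    mul_nonneg (Real.rpow_nonneg (norm_nonneg _) _) (Real.rpow_nonneg I₂.len_pos.le _)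
  set A₁ : Rn n₁ → ℝ := fun y => haarCube I₁ η₁ (y - v.1) - haarCube I₁ η₁ y with hA₁
  set B₂ : Rn n₂ → ℝ := fun y => haarCube I₂ η₂ (y - v.2) with hB₂
  set A₁' : Rn n₁ → ℝ := haarCube I₁ η₁ with hA₁'
  set B₂' : Rn n₂ → ℝ := fun y => haarCube I₂ η₂ (y - v.2) - haarCube I₂ η₂ y with hB₂'
  have hmA₁ : Measurable A₁ :=
    ((measurable_haarCube I₁ η₁).comp (measurable_id.sub measurable_const)).sub
      (measurable_haarCube I₁ η₁)
  have hmB₂ : Measurable B₂ :=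
    (measurable_haarCube I₂ η₂).comp (measurable_id.sub measurable_const)
  have hmA₁' : Measurable A₁' := measurable_haarCube I₁ η₁
  have hmB₂' : Measurable B₂' :=
    ((measurable_haarCube I₂ η₂).comp (measurable_id.sub measurable_const)).sub
      (measurable_haarCube I₂ η₂)
  have hsplit : (fun x : Rnn n₁ n₂ =>
      haarCube I₁ η₁ (x.1 - v.1) * haarCube I₂ η₂ (x.2 - v.2) -
        haarCube I₁ η₁ x.1 * haarCube I₂ η₂ x.2)
      = (fun x : Rnn n₁ n₂ => A₁ x.1 * B₂ x.2) + (fun x => A₁' x.1 * B₂' x.2) := by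
    funext x
    simp only [Pi.add_apply, hA₁, hB₂, hA₁', hB₂']
    ring
  rw [hsplit]
  have hm1 : AEStronglyMeasurable (fun x : Rnn n₁ n₂ => A₁ x.1 * B₂ x.2) volume :=
    ((hmA₁.comp measurable_fst).mul (hmB₂.comp measurable_snd)).aestronglyMeasurable
  have hm2 : AEStronglyMeasurable (fun x : Rnn n₁ n₂ => A₁' x.1 * B₂' x.2) volume :=
    ((hmA₁'.comp measurable_fst).mul (hmB₂'.comp measurable_snd)).aestronglyMeasurable
  refine (eLpNorm_add_le hm1 hm2 one_le_two).trans ?_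
  rw [eLpNorm_prod_mul A₁ B₂ hmA₁ hmB₂, eLpNorm_prod_mul A₁' B₂' hmA₁' hmB₂']
  have hB₂le : eLpNorm B₂ 2 volume ≤ 1 := by
    have : B₂ = haarCube I₂ η₂ ∘ (fun y => y - v.2) := rfl
    rw [this, eLpNorm_comp_measurePreserving (measurable_haarCube I₂ η₂).aestronglyMeasurable
      (measurePreserving_sub_right volume v.2)]
    exact eLpNorm_haarCube_le_one I₂ η₂
  have hA₁le : eLpNorm A₁ 2 volume ≤ (n₁ : ℝ≥0∞) * ENNReal.ofReal (4 * a₁) :=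
    eLpNorm_haarCube_sub I₁ η₁ v.1
  have hA₁'le : eLpNorm A₁' 2 volume ≤ 1 := eLpNorm_haarCube_le_one I₁ η₁
  have hB₂'le : eLpNorm B₂' 2 volume ≤ (n₂ : ℝ≥0∞) * ENNReal.ofReal (4 * a₂) :=
    eLpNorm_haarCube_sub I₂ η₂ v.2
  have step : eLpNorm A₁ 2 volume * eLpNorm B₂ 2 volume +
      eLpNorm A₁' 2 volume * eLpNorm B₂' 2 volume
      ≤ (n₁ : ℝ≥0∞) * ENNReal.ofReal (4 * a₁) + (n₂ : ℝ≥0∞) * ENNReal.ofReal (4 * a₂) := by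
    have t1 : eLpNorm A₁ 2 volume * eLpNorm B₂ 2 volume
        ≤ (n₁ : ℝ≥0∞) * ENNReal.ofReal (4 * a₁) := by
      calc eLpNorm A₁ 2 volume * eLpNorm B₂ 2 volume
          ≤ ((n₁ : ℝ≥0∞) * ENNReal.ofReal (4 * a₁)) * 1 := mul_le_mul' hA₁le hB₂le
        _ = _ := mul_one _
    have t2 : eLpNorm A₁' 2 volume * eLpNorm B₂' 2 volume
        ≤ (n₂ : ℝ≥0∞) * ENNReal.ofReal (4 * a₂) := by
      calc eLpNorm A₁' 2 volume * eLpNorm B₂' 2 volume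
          ≤ 1 * ((n₂ : ℝ≥0∞) * ENNReal.ofReal (4 * a₂)) := mul_le_mul' hA₁'le hB₂'le
        _ = _ := one_mul _
    exact add_le_add t1 t2
  refine step.trans ?_
  have hcast : ∀ (m : ℕ) (c : ℝ), 0 ≤ c →
      (m : ℝ≥0∞) * ENNReal.ofReal c = ENNReal.ofReal ((m : ℝ) * c) := by
    intro m c hc
    rw [ENNReal.ofReal_mul (by positivity : (0 : ℝ) ≤ (m : ℝ)), ENNReal.ofReal_natCast]
  rw [hcast n₁ (4 * a₁) (by positivity), hcast n₂ (4 * a₂) (by positivity),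
    ← ENNReal.ofReal_add (by positivity) (by positivity)]
  apply ENNReal.ofReal_le_ofReal
  nlinarith [ha₁0, ha₂0, (Nat.one_le_cast (α := ℝ)).2 hn₁, (Nat.one_le_cast (α := ℝ)).2 hn₂]
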